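/- arXiv:1912.05253 — 6 statements merged into one kernel-verified Lean document; each statement's English description precedes it below -/
import Mathlib

section
/- For every n ≥ 0 and k > 2, the length of the finite k-bonacci word W_n^(k) equals the (n+k)-th k-bonacci number f_{n+k}^(k). -/
def kbon (k : ℕ) (n : ℕ) : ℕ :=
  if _h1 : n < k - 1 then 0
  else if _h2 : n = k - 1 then 1
  else ∑ i ∈ Finset.range k, kbon k (n - i - 1)
termination_by n
decreasing_by omega

/-- The k-bonacci morphism on words over ℕ. -/
def phiW (k : ℕ) (w : List ℕ) : List ℕ :=
  w.flatMap (fun a => if a % k = k - 1 then [a + 1] else [k * (a / k), a + 1])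

/-- The finite k-bonacci word over the infinite alphabet ℕ. -/
def W (k n : ℕ) : List ℕ := (phiW k)^[n] [0]

/-- count of letters with residue j mod k -/
def cnt (k j : ℕ) (w : List ℕ) : ℕ := (w.filter (fun a => a % k = j)).length

lemma phiW_cons (k a : ℕ) (w : List ℕ) :
    phiW k (a :: w) = (if a % k = k - 1 then [a + 1] else [k * (a / k), a + 1]) ++ phiW k w := rfl

lemma len_phiW (k : ℕ) (w : List ℕ) :
    (phiW k w).length + cnt k (k-1) w = 2 * w.length := by
  induction w with
  | nil => simp [phiW, cnt]
  | cons a w ih =>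
    rw [phiW_cons]
    simp only [cnt, List.filter_cons] at *
    by_cases h : a % k = k - 1 <;> simp [h] <;> omega

lemma cnt0_phiW (k : ℕ) (hk : 2 < k) (w : List ℕ) :
    cnt k 0 (phiW k w) = w.length := by
  induction w with
  | nil => simp [phiW, cnt]
  | cons a w ih =>
    rw [phiW_cons]
    simp only [cnt, List.filter_append, List.length_append] at *
    by_cases h : a % k = k - 1
    · have h1 : (a + 1) % k = 0 := by
        rw [Nat.add_mod, Nat.mod_eq_of_lt (show 1 < k by omega), h,
          show k - 1 + 1 = k by omega, Nat.mod_self]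
      simp [h, h1, ih]
      omega
    · have hlt : a % k < k - 1 := by
        have := Nat.mod_lt a (show 0 < k by omega); omega
      have h1 : (a + 1) % k = a % k + 1 := by
        rw [Nat.add_mod, Nat.mod_eq_of_lt (show 1 < k by omega),
          Nat.mod_eq_of_lt (by omega : a % k + 1 < k)]
      have h2 : (k * (a / k)) % k = 0 := Nat.mul_mod_right _ _
      simp [h, h1, h2, ih]
      omega

lemma cnt_succ_phiW (k j : ℕ) (hk : 2 < k) (hj : j < k - 1) (w : List ℕ) :
    cnt k (j+1) (phiW k w) = cnt k j w := by
  induction w with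
  | nil => simp [phiW, cnt]
  | cons a w ih =>
    rw [phiW_cons]
    simp only [cnt, List.filter_append, List.length_append, List.filter_cons] at *
    by_cases h : a % k = k - 1
    · have h1 : (a + 1) % k = 0 := by
        rw [Nat.add_mod, Nat.mod_eq_of_lt (show 1 < k by omega), h,
          show k - 1 + 1 = k by omega, Nat.mod_self]
      have hne : ¬ (a % k = j) := by omega
      have hne' : ¬ (k - 1 = j) := by omega
      have hne2 : ¬ ((0:ℕ) = j + 1) := by omega
      simp [h, h1, hne, hne', hne2, ih] <;> omega
    · have hlt : a % k < k - 1 := by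
        have := Nat.mod_lt a (show 0 < k by omega); omega
      have h1 : (a + 1) % k = a % k + 1 := by
        rw [Nat.add_mod, Nat.mod_eq_of_lt (show 1 < k by omega),
          Nat.mod_eq_of_lt (by omega : a % k + 1 < k)]
      have h2 : (k * (a / k)) % k = 0 := Nat.mul_mod_right _ _
      have hne2 : ¬ ((0:ℕ) = j + 1) := by omega
      by_cases he : a % k = j
      · have h1' : (a + 1) % k = j + 1 := by rw [h1, he]
        have hne4 : ¬ (j = k - 1) := by omega
        simp [h, h1', h2, he, hne2, hne4, ih] <;> omega
      · have hne3 : ¬ (a % k + 1 = j + 1) := by omega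
        simp [h, h1, h2, he, hne2, hne3, ih] <;> omega

lemma W_succ (k n : ℕ) : W k (n+1) = phiW k (W k n) := by
  simp [W, Function.iterate_succ_apply']

lemma mem_W_le (k n : ℕ) : ∀ a ∈ W k n, a ≤ n := by
  induction n with
  | zero => simp [W]
  | succ m ih =>
    intro a ha
    rw [W_succ] at ha
    simp only [phiW, List.mem_flatMap] at ha
    obtain ⟨b, hb, hab⟩ := ha
    have hbm := ih b hb
    by_cases h : b % k = k - 1 <;> simp [h] at hab
    · omega
    · rcases hab with h1 | h1
      · have := Nat.mul_div_le b k
        omega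
      · omega

lemma cnt_chain (k : ℕ) (hk : 2 < k) : ∀ j, j ≤ k - 1 → ∀ m, cnt k j (W k (m + j)) = cnt k 0 (W k m) := by
  intro j
  induction j with
  | zero => intro _ m; rfl
  | succ i ih =>
    intro hj m
    rw [show m + (i+1) = (m+i) + 1 by ring, W_succ, cnt_succ_phiW k i hk (by omega)]
    exact ih (by omega) m

lemma kbon_small (k n : ℕ) (h : n < k - 1) : kbon k n = 0 := by
  rw [kbon]; simp [h]

lemma kbon_base (k : ℕ) : kbon k (k-1) = 1 := by
  rw [kbon]; simp

lemma kbon_k (k : ℕ) (hk : 2 < k) : kbon k k = 1 := by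
  rw [kbon]
  have h1 : ¬ (k < k - 1) := by omega
  have h2 : ¬ (k = k - 1) := by omega
  simp only [h1, h2, dif_neg, not_false_iff]
  rw [Finset.sum_eq_single_of_mem 0 (Finset.mem_range.mpr (by omega : 0 < k))
    (fun i hi hne => kbon_small k _ (by simp only [Finset.mem_range] at hi; omega))]
  simpa using kbon_base k

lemma kbon_rec (k n : ℕ) (hk : 2 < k) :
    kbon k (n + k + 1) + kbon k n = 2 * kbon k (n + k) := by
  have hS : ∀ m, k ≤ m → kbon k m = ∑ i ∈ Finset.range k, kbon k (m - i - 1) := by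
    intro m hm
    rw [kbon]
    have h1 : ¬ (m < k - 1) := by omega
    have h2 : ¬ (m = k - 1) := by omega
    simp [h1, h2]
  have e1 : kbon k (n + k + 1) = (∑ i ∈ Finset.range (k-1), kbon k (n + k - 1 - i)) + kbon k (n + k) := by
    rw [hS (n+k+1) (by omega)]
    rw [show k = (k - 1) + 1 from by omega, Finset.sum_range_succ']
    simp only [Nat.add_sub_cancel]
    rw [show n + ((k-1)+1) + 1 - 0 - 1 = n + ((k-1)+1) from by omega]
    congr 1
    exact Finset.sum_congr rfl fun i hi => by congr 1 <;> omega
  have e2 : kbon k (n + k) = (∑ i ∈ Finset.range (k-1), kbon k (n + k - 1 - i)) + kbon k n := by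
    rw [hS (n+k) (by omega)]
    rw [show k = (k - 1) + 1 from by omega, Finset.sum_range_succ]
    simp only [Nat.add_sub_cancel]
    rw [show n + ((k-1)+1) - ((k-1)) - 1 = n from by omega]
    congr 1
    exact Finset.sum_congr rfl fun i hi => by congr 1 <;> omega
  omega

theorem length_W_eq_kbon (k n : ℕ) (hk : 2 < k) :
    (W k n).length = kbon k (n + k) := by
  suffices H : ∀ n, (W k n).length = kbon k (n + k) ∧ cnt k (k-1) (W k n) = kbon k n from (H n).1
  intro n
  induction n using Nat.strong_induction_on with
  | _ n ih =>
    match n with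
    | 0 =>
      constructor
      · simpa [W] using (kbon_k k hk).symm
      · have h0 : ¬ ((0:ℕ) = k - 1) := by omega
        simp [W, cnt, h0, kbon_small k 0 (by omega)]
    | (m+1) =>
      obtain ⟨ih1, ih2⟩ := ih m (by omega)
      have hlen : (W k (m+1)).length + kbon k m = 2 * kbon k (m + k) := by
        rw [W_succ, ← ih1, ← ih2]
        exact len_phiW k (W k m)
      constructor
      · have hr := kbon_rec k m hk
        have e : m + 1 + k = m + k + 1 := by omega
        rw [e]
        omega
      · rcases lt_trichotomy (m+1) (k-1) with h | h | h
        · have : cnt k (k-1) (W k (m+1)) = 0 := by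
            simp only [cnt, List.length_eq_zero_iff, List.filter_eq_nil_iff]
            intro a ha
            have hle := mem_W_le k (m+1) a ha
            have : a % k = a := Nat.mod_eq_of_lt (by omega)
            simp; omega
          rw [this, kbon_small k (m+1) h]
        · have e : m + 1 = 0 + (k-1) := by omega
          rw [e, cnt_chain k hk (k-1) (le_refl _) 0]
          have : cnt k 0 (W k 0) = 1 := by simp [W, cnt]
          rw [this, ← e, h, kbon_base]
        · have hp : m + 1 = (m + 1 - k + 1) + (k - 1) := by omega
          rw [hp, cnt_chain k hk (k-1) (le_refl _) (m + 1 - k + 1), W_succ,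
            cnt0_phiW k hk]
          obtain ⟨ihp, _⟩ := ih (m + 1 - k) (by omega)
          rw [ihp]
          congr 1
          omega
end

section
/- For every n ≥ 0 and k > 2, the word W_n^(k) contains no factor equal to 00 (two consecutive zeros). -/
lemma chainP (k : ℕ) (w : List ℕ) :
    List.Chain' (fun a b => ¬(a = 0 ∧ b = 0)) (phiW k w) := by
  induction w with
  | nil => simp [phiW, List.Chain']
  | cons a w ih =>
    have : phiW k (a :: w) =
        (if a % k = k - 1 then [a + 1] else [k * (a / k), a + 1]) ++ phiW k w := by
      simp [phiW]
    rw [this, List.Chain', List.isChain_append]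
    refine ⟨?_, ih, ?_⟩
    · split_ifs <;> simp
    · intro x hx y _
      split_ifs at hx <;> simp_all <;> omega

theorem no_factor_00 (k n : ℕ) (hk : 2 < k) :
    ¬ [0, 0] <:+: W k n := by
  cases n with
  | zero =>
    intro h
    have := h.length_le
    simp [W] at this
  | succ m =>
    intro h
    have hW : W k (m + 1) = phiW k (W k m) := by
      simp [W, Function.iterate_succ_apply']
    rw [hW] at h
    have := (chainP k (W k m)).infix h
    simp [List.Chain', List.isChain_cons_cons] at this
end

section
/- For all nonnegative integers i and n, the word ki ⊕ W_n^(k) (the word obtained by adding ki to each digit of W_n^(k)) is a factor of W_{n+ki}^(k). -/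
lemma phiW_append (k : ℕ) (u v : List ℕ) :
    phiW k (u ++ v) = phiW k u ++ phiW k v := by
  simp [phiW]

lemma phiW_infix (k : ℕ) {u v : List ℕ} (h : u <:+: v) :
    phiW k u <:+: phiW k v := by
  obtain ⟨s, t, rfl⟩ := h
  exact ⟨phiW k s, phiW k t, by simp [phiW_append]⟩

lemma phiW_iterate_infix (k n : ℕ) {u v : List ℕ} (h : u <:+: v) :
    (phiW k)^[n] u <:+: (phiW k)^[n] v := by
  induction n with
  | zero => simpa using h
  | succ n ih =>
    rw [Function.iterate_succ_apply', Function.iterate_succ_apply']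
    exact phiW_infix k ih

lemma phiW_map_add (k : ℕ) (hk : 0 < k) (w : List ℕ) :
    phiW k (w.map (· + k)) = (phiW k w).map (· + k) := by
  induction w with
  | nil => rfl
  | cons a w ih =>
    have hmod : (a + k) % k = a % k := Nat.add_mod_right a k
    have hdiv : (a + k) / k = a / k + 1 := Nat.add_div_right a hk
    simp only [phiW, List.map_cons, List.flatMap_cons] at *
    rw [ih, hmod, hdiv]
    by_cases h : a % k = k - 1
    · simp [h]; ring
    · simp [h, Nat.mul_add]; omega

lemma phiW_iterate_map_add (k : ℕ) (hk : 0 < k) (n : ℕ) (w : List ℕ) :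
    (phiW k)^[n] (w.map (· + k)) = ((phiW k)^[n] w).map (· + k) := by
  induction n with
  | zero => rfl
  | succ n ih =>
    rw [Function.iterate_succ_apply', Function.iterate_succ_apply', ih,
      phiW_map_add k hk]

lemma singleton_infix_W (k : ℕ) (hk : 2 < k) :
    ∀ j, j ≤ k - 1 → [j] <:+: W k j := by
  intro j
  induction j with
  | zero => intro _; exact List.infix_refl _
  | succ j ih =>
    intro hj
    have h := ih (by omega)
    have hjm : j % k = j := Nat.mod_eq_of_lt (by omega)
    have hstep : phiW k [j] = [k * (j / k), j + 1] := by
      simp [phiW, hjm]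
      omega
    have h2 : phiW k [j] <:+: phiW k (W k j) := phiW_infix k h
    rw [hstep] at h2
    have h3 : [j + 1] <:+: [k * (j / k), j + 1] := ⟨[k * (j / k)], [], by simp⟩
    have : W k (j + 1) = phiW k (W k j) := by
      simp [W, Function.iterate_succ_apply']
    rw [this]
    exact h3.trans h2

lemma k_infix_W_k (k : ℕ) (hk : 2 < k) : [k] <:+: W k k := by
  have h := singleton_infix_W k hk (k - 1) le_rfl
  have hstep : phiW k [k - 1] = [k] := by
    have : (k - 1) % k = k - 1 := Nat.mod_eq_of_lt (by omega)
    simp [phiW, this]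
    omega
  have h2 : phiW k [k - 1] <:+: phiW k (W k (k - 1)) := phiW_infix k h
  rw [hstep] at h2
  have : W k k = phiW k (W k (k - 1)) := by
    have hk1 : k = (k - 1) + 1 := by omega
    rw [hk1]
    simp [W, Function.iterate_succ_apply']
  rw [this]
  exact h2

lemma shift_lemma (k : ℕ) (hk : 2 < k) (m : ℕ) :
    (W k m).map (· + k) <:+: W k (m + k) := by
  have h1 : (phiW k)^[m] [k] <:+: (phiW k)^[m] (W k k) :=
    phiW_iterate_infix k m (k_infix_W_k k hk)
  have heq : (phiW k)^[m] [k] = ((phiW k)^[m] [0]).map (· + k) := by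
    have h0 : ([k] : List ℕ) = ([0] : List ℕ).map (· + k) := by simp
    rw [h0, phiW_iterate_map_add k (by omega)]
  have hW : W k (m + k) = (phiW k)^[m] (W k k) := by
    simp [W, Function.iterate_add_apply]
  rw [hW]
  rw [heq] at h1
  exact h1

theorem oplus_ki_W_isInfix (k : ℕ) (hk : 2 < k) (i n : ℕ) :
    ((W k n).map (· + k * i)) <:+: W k (n + k * i) := by
  induction i with
  | zero => simp
  | succ i ih =>
    have h1 : ((W k n).map (· + k * i)).map (· + k) <:+:
        (W k (n + k * i)).map (· + k) := ih.map _
    have h2 := shift_lemma k hk (n + k * i)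
    have h3 := h1.trans h2
    rw [List.map_map] at h3
    have he : ((· + k) ∘ (· + k * i)) = (· + k * (i + 1)) := by
      funext a; simp [Nat.mul_succ]; ring
    have he2 : n + k * i + k = n + k * (i + 1) := by ring
    rwa [he, he2] at h3
end

section
/- If n < k+1, then W_n^(k) contains no square factor, i.e., no nonempty factor of the form UU. -/
instance : Fact (Nat.Prime 2) := ⟨Nat.prime_two⟩

def rul (i : ℕ) : ℕ := padicValNat 2 (i + 1)

lemma ruler_no_square (p L : ℕ) (hL : 0 < L)
    (h : ∀ j < L, rul (p + j) = rul (p + L + j)) : False := by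
  obtain ⟨a, ha, hmax⟩ := Finset.exists_max_image (Finset.Icc (p+1) (p+L))
    (padicValNat 2) ⟨p+1, by simp; omega⟩
  rw [Finset.mem_Icc] at ha
  set v := padicValNat 2 a with hv
  have haL : padicValNat 2 (a + L) = v := by
    have h2 := h (a - 1 - p) (by omega)
    unfold rul at h2
    rw [show p + (a - 1 - p) + 1 = a by omega, show p + L + (a - 1 - p) + 1 = a + L by omega] at h2
    exact h2.symm
  have ha0 : a ≠ 0 := by omega
  have hva : 2 ^ v ∣ a := pow_padicValNat_dvd
  have hvaL : 2 ^ v ∣ a + L := by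
    have : 2 ^ padicValNat 2 (a + L) ∣ a + L := pow_padicValNat_dvd
    rwa [haL] at this
  have hna : ¬ 2 ^ (v+1) ∣ a := by
    rw [padicValNat_dvd_iff_le ha0]; omega
  have hnaL : ¬ 2 ^ (v+1) ∣ a + L := by
    rw [padicValNat_dvd_iff_le (by omega)]; omega
  obtain ⟨b, hb⟩ := hva
  obtain ⟨c, hc⟩ := hvaL
  have hbodd : ¬ 2 ∣ b := fun ⟨d, hd⟩ => hna ⟨d, by rw [hb, hd]; ring⟩
  have hcodd : ¬ 2 ∣ c := fun ⟨d, hd⟩ => hnaL ⟨d, by rw [hc, hd]; ring⟩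
  have hbc : b < c := by nlinarith [Nat.one_le_two_pow (n := v)]
  have hLdvd : 2 ^ (v+1) ∣ L := by
    have h2bc : 2 ∣ c - b := by omega
    obtain ⟨d, hd⟩ := h2bc
    exact ⟨d, by rw [pow_succ]; nlinarith [Nat.sub_add_cancel hbc.le]⟩
  have hLge : 2 ^ (v+1) ≤ L := Nat.le_of_dvd hL hLdvd
  set a' := 2 ^ (v+1) * (p / 2 ^ (v+1) + 1) with ha'
  have hpow : 0 < 2 ^ (v+1) := Nat.pow_pos (by norm_num)
  have hdm : 2 ^ (v+1) * (p / 2 ^ (v+1)) + p % 2 ^ (v+1) = p := Nat.div_add_mod p _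
  have hmlt : p % 2 ^ (v+1) < 2 ^ (v+1) := Nat.mod_lt p hpow
  have ha'eq : a' = 2 ^ (v+1) * (p / 2 ^ (v+1)) + 2 ^ (v+1) := by rw [ha']; ring
  have h1 : p < a' := by omega
  have h2' : a' ≤ p + 2 ^ (v+1) := by omega
  have hmem : a' ∈ Finset.Icc (p+1) (p+L) := Finset.mem_Icc.2 ⟨by omega, by omega⟩
  have hle := hmax a' hmem
  have : v + 1 ≤ padicValNat 2 a' := by
    rw [← padicValNat_dvd_iff_le (by positivity)]
    exact Dvd.intro _ rfl
  omega

lemma no_square_map (m : ℕ) (U : List ℕ) (hU : U ≠ []) :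
    ¬ (U ++ U) <:+: (List.range m).map rul := by
  rintro ⟨s, t, heq⟩
  have hlen : s.length + (U.length + U.length + t.length) = m := by
    have := congrArg List.length heq
    simp at this; omega
  have hUL : 0 < U.length := List.length_pos_iff.2 hU
  apply ruler_no_square s.length U.length hUL
  intro j hj
  have base : ∀ i (hi : i < m),
      (s ++ (U ++ U) ++ t)[i]'(by simp; omega) = rul i := by
    intro i hi
    rw [List.getElem_of_eq heq]
    simp
  have e1 : rul (s.length + j) = U[j] := by
    rw [← base (s.length + j) (by omega)]
    rw [List.getElem_append_left (by simp; omega)]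
    rw [List.getElem_append_right (by omega)]
    rw [List.getElem_append_left (by omega)]
    congr 1
    omega
  have e2 : rul (s.length + U.length + j) = U[j] := by
    rw [← base (s.length + U.length + j) (by omega)]
    rw [List.getElem_append_left (by simp; omega)]
    rw [List.getElem_append_right (by omega)]
    rw [List.getElem_append_right (by omega)]
    congr 1
    omega
  rw [e1, e2]

lemma rul_even (i : ℕ) : rul (2 * i) = 0 :=
  padicValNat.eq_zero_of_not_dvd (by omega)

lemma rul_odd (i : ℕ) : rul (2 * i + 1) = rul i + 1 := by
  unfold rul
  rw [show 2 * i + 1 + 1 = 2 * (i + 1) by ring,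
    padicValNat.mul (by norm_num) (by omega), padicValNat_self]
  omega

lemma rul_lt {i n : ℕ} (h : i + 1 < 2 ^ n) : rul i < n := by
  have h1 : 2 ^ rul i ∣ i + 1 := pow_padicValNat_dvd
  have h2 : 2 ^ rul i ≤ i + 1 := Nat.le_of_dvd (by omega) h1
  have := Nat.pow_lt_pow_iff_right (a := 2) (by norm_num) (n := rul i) (m := n)
  omega

lemma rul_pow (n : ℕ) : rul (2 ^ n - 1) = n := by
  unfold rul
  rw [show 2 ^ n - 1 + 1 = 2 ^ n by have := Nat.one_le_two_pow (n := n); omega]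
  simp [padicValNat.prime_pow]

lemma expand (k : ℕ) (hk : 2 < k) :
    ∀ m, (∀ i < m, rul i < k - 1) →
    phiW k ((List.range m).map rul) = (List.range (2 * m)).map rul := by
  intro m
  induction m with
  | zero => intro _; simp [phiW]
  | succ m ih =>
    intro hb
    have hbm := hb m (by omega)
    rw [List.range_succ, List.map_append, show 2 * (m + 1) = 2 * m + 1 + 1 by ring,
      List.range_succ, List.range_succ, List.map_append, List.map_append]
    unfold phiW
    rw [List.flatMap_append, ← phiW]
    rw [ih (fun i hi => hb i (by omega))]
    have hmod : rul m % k = rul m := Nat.mod_eq_of_lt (by omega)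
    have hne : ¬ rul m % k = k - 1 := by omega
    have hdiv : rul m / k = 0 := Nat.div_eq_of_lt (by omega)
    simp only [List.flatMap_cons, List.flatMap_nil, if_neg hne, hdiv, List.map_cons,
      List.map_nil, List.append_nil, mul_zero, List.append_assoc]
    congr 1
    simp [rul_even, rul_odd]

lemma W_eq (k : ℕ) (hk : 2 < k) : ∀ n, n ≤ k - 1 → W k n = (List.range (2 ^ n)).map rul := by
  intro n
  induction n with
  | zero =>
    intro _
    have h0 : rul 0 = 0 := padicValNat.one
    rw [show (2:ℕ) ^ 0 = 1 from rfl, show List.range 1 = [0] from rfl]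
    simp [W, h0]
  | succ n ih =>
    intro hn
    have : W k (n + 1) = phiW k (W k n) := Function.iterate_succ_apply' _ _ _
    rw [this, ih (by omega), expand k hk]
    · rw [show 2 * 2 ^ n = 2 ^ (n + 1) by ring]
    · intro i hi
      have e : (2:ℕ) ^ (n + 1) = 2 * 2 ^ n := by ring
      have := rul_lt (n := n + 1) (i := i) (by omega)
      omega

lemma W_top (k : ℕ) (hk : 2 < k) :
    W k k = (List.range (2 ^ k - 2)).map rul ++ [k] := by
  obtain ⟨m, rfl⟩ : ∃ m, k = m + 1 := ⟨k - 1, by omega⟩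
  have hk1 : W (m + 1) (m + 1) = phiW (m + 1) (W (m + 1) m) :=
    Function.iterate_succ_apply' _ _ _
  rw [hk1, W_eq (m + 1) hk m (by omega)]
  have h2 : (2:ℕ) ^ m = (2 ^ m - 1) + 1 := by
    have := Nat.one_le_two_pow (n := m); omega
  rw [h2, List.range_succ, List.map_append]
  unfold phiW
  rw [List.flatMap_append, ← phiW,
    expand (m + 1) hk _ (fun i hi => rul_lt (by simp; omega))]
  have hlast : rul (2 ^ m - 1) = m := rul_pow _
  have hmod : m % (m + 1) = m := Nat.mod_eq_of_lt (by omega)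
  have hmm : m + 1 - 1 = m := by omega
  simp only [List.map_cons, List.map_nil, List.flatMap_cons, List.flatMap_nil, hlast, hmm, if_pos hmod, List.append_nil]
  congr 2
  · congr 1
    have h3 : 2 * 2 ^ m = 2 ^ (m + 1) := (pow_succ' 2 m).symm
    have := Nat.one_le_two_pow (n := m)
    omega

lemma square_infix_concat {v : List ℕ} {x : ℕ} {U : List ℕ} (hx : x ∉ v) (hU : U ≠ [])
    (h : (U ++ U) <:+: v ++ [x]) : (U ++ U) <:+: v := by
  have hxU : x ∉ U := by
    intro hmem
    have hcount : (U ++ U).count x ≤ (v ++ [x]).count x := h.sublist.count_le x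
    have h1 : 1 ≤ U.count x := List.count_pos_iff.2 hmem
    have h2 : v.count x = 0 := List.count_eq_zero_of_not_mem hx
    simp [List.count_append, h2] at hcount
    omega
  obtain ⟨s, t, heq⟩ := h
  rcases t.eq_nil_or_concat with rfl | ⟨t', y, rfl⟩
  · exfalso
    rcases (U ++ U).eq_nil_or_concat with hnil | ⟨w, y, hw⟩
    · exact hU (List.append_eq_nil_iff.mp hnil).1
    · rw [List.concat_eq_append] at hw
      rw [hw] at heq
      simp only [List.append_nil, ← List.append_assoc] at heq
      obtain ⟨-, h2⟩ := List.append_inj' heq rfl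
      have : y ∈ U ++ U := hw ▸ List.mem_append_right w (List.mem_singleton_self y)
      rw [List.singleton_inj.1 h2] at this
      rcases List.mem_append.1 this with h | h <;> exact hxU h
  · have heq' : (s ++ (U ++ U) ++ t') ++ [y] = v ++ [x] := by
      rw [← heq]; simp [List.append_assoc]
    obtain ⟨h1, -⟩ := List.append_inj' heq' rfl
    exact ⟨s, t', h1⟩

theorem no_square_small (k n : ℕ) (hk : 2 < k) (hn : n < k + 1) :
    ∀ U : List ℕ, U ≠ [] → ¬ (U ++ U) <:+: W k n := by
  intro U hU hinf
  rcases Nat.lt_or_ge n k with hlt | hge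
  · rw [W_eq k hk n (by omega)] at hinf
    exact no_square_map _ U hU hinf
  · have hnk : n = k := by omega
    subst hnk
    rw [W_top n hk] at hinf
    have hx : n ∉ (List.range (2 ^ n - 2)).map rul := by
      simp only [List.mem_map, List.mem_range]
      rintro ⟨i, hi, hri⟩
      have : rul i < n := rul_lt (n := n) (by omega)
      omega
    exact no_square_map _ U hU (square_infix_concat hx hU hinf)
end

section
/- For any integers i and n with i < n and n ≥ k+1, the word W_n^(k) contains no factor of the form W_i^(k) W_i^(k). -/
namespace KbonAux

/-- The image block of a single letter. -/
def blk (k a : ℕ) : List ℕ := if a % k = k - 1 then [a + 1] else [k * (a / k), a + 1]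

lemma phiW_nil (k : ℕ) : phiW k [] = [] := rfl

lemma phiW_cons (k a : ℕ) (w : List ℕ) : phiW k (a :: w) = blk k a ++ phiW k w := rfl

lemma phiW_append (k : ℕ) (u v : List ℕ) : phiW k (u ++ v) = phiW k u ++ phiW k v :=
  List.flatMap_append

lemma blk_of_eq {k a : ℕ} (h : a % k = k - 1) : blk k a = [a + 1] := by
  simp [blk, h]

lemma blk_of_ne {k a : ℕ} (h : a % k ≠ k - 1) : blk k a = [k * (a / k), a + 1] := by
  simp [blk, h]

lemma blk_concat (k a : ℕ) : ∃ B, blk k a = B ++ [a + 1] := by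
  by_cases h : a % k = k - 1
  · exact ⟨[], by simp [blk_of_eq h]⟩
  · exact ⟨[k * (a / k)], by simp [blk_of_ne h]⟩

lemma blk_head0 (k a : ℕ) (hk : 2 < k) :
    ∃ h t, blk k a = h :: t ∧ h % k = 0 := by
  by_cases h : a % k = k - 1
  · refine ⟨a + 1, [], by simp [blk_of_eq h], ?_⟩
    have : a + 1 = (a % k + 1) + k * (a / k) := by
      have := Nat.mod_add_div a k; omega
    rw [this, Nat.add_mul_mod_self_left, h]
    have : k - 1 + 1 = k := by omega
    rw [this, Nat.mod_self]
  · refine ⟨k * (a / k), [a + 1], by simp [blk_of_ne h], Nat.mul_mod_right _ _⟩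

lemma mod_succ_of_ne {k a : ℕ} (hk : 2 < k) (h : a % k ≠ k - 1) :
    (a + 1) % k = a % k + 1 := by
  have h2 : a % k < k := Nat.mod_lt _ (by omega)
  have h3 : a % k + 1 < k := by omega
  have e : a + 1 = (a % k + 1) + k * (a / k) := by
    have := Nat.mod_add_div a k; omega
  rw [e, Nat.add_mul_mod_self_left, Nat.mod_eq_of_lt h3]

lemma mod_succ_of_eq {k a : ℕ} (hk : 2 < k) (h : a % k = k - 1) :
    (a + 1) % k = 0 := by
  have e : a + 1 = (a % k + 1) + k * (a / k) := by
    have := Nat.mod_add_div a k; omega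
  rw [e, Nat.add_mul_mod_self_left, h]
  have : k - 1 + 1 = k := by omega
  rw [this, Nat.mod_self]

/-- Synchronization lemma: a φ-image prefix of a φ-image desubstitutes, except possibly
misaligned at its very last letter. -/
lemma sync (k : ℕ) (hk : 2 < k) :
    ∀ u z : List ℕ, phiW k u <+: phiW k z →
    u <+: z ∨ ∃ r a b z₂, u = r ++ [a] ∧ a % k = k - 1 ∧ z = r ++ b :: z₂ ∧
      k * (b / k) = a + 1 ∧ b % k ≠ k - 1 := by
  intro u
  induction u with
  | nil => exact fun z _ => Or.inl (List.nil_prefix)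
  | cons a u' ih =>
    intro z h
    match z with
    | [] =>
      exfalso
      rw [phiW_nil, List.prefix_nil] at h
      rw [phiW_cons] at h
      rcases blk_concat k a with ⟨B, hB⟩
      rw [hB] at h
      simp at h
    | b :: z' =>
      by_cases hab : a = b
      · subst hab
        rw [phiW_cons, phiW_cons] at h
        have h' : phiW k u' <+: phiW k z' := (List.prefix_append_right_inj _).1 h
        rcases ih z' h' with h1 | ⟨r, a', b', z₂, e1, e2, e3, e4, e5⟩
        · exact Or.inl (List.cons_prefix_cons.2 ⟨rfl, h1⟩)
        · exact Or.inr ⟨a :: r, a', b', z₂, by simp [e1], e2, by simp [e3], e4, e5⟩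
      · rcases h with ⟨t, ht⟩
        rw [phiW_cons, phiW_cons] at ht
        by_cases ha : a % k = k - 1 <;> by_cases hb : b % k = k - 1
        · rw [blk_of_eq ha, blk_of_eq hb] at ht
          simp at ht
          omega
        · rw [blk_of_eq ha, blk_of_ne hb] at ht
          simp only [List.cons_append, List.nil_append, List.cons.injEq] at ht
          obtain ⟨he1, he2⟩ := ht
          match u' with
          | [] =>
            exact Or.inr ⟨[], a, b, z', by simp, ha, by simp, he1.symm, hb⟩
          | c :: u'' =>
            exfalso
            rw [phiW_cons] at he2
            rcases blk_head0 k c hk with ⟨h0, t0, hblk, hmod⟩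
            rw [hblk] at he2
            simp only [List.cons_append, List.append_assoc, List.cons.injEq] at he2
            have : h0 = b + 1 := he2.1
            rw [this, mod_succ_of_ne hk hb] at hmod
            omega
        · exfalso
          rw [blk_of_ne ha, blk_of_eq hb] at ht
          simp only [List.cons_append, List.nil_append, List.cons.injEq] at ht
          obtain ⟨he1, he2⟩ := ht
          match z' with
          | [] => rw [phiW_nil] at he2; simp at he2
          | c :: z'' =>
            rw [phiW_cons] at he2
            rcases blk_head0 k c hk with ⟨h0, t0, hblk, hmod⟩
            rw [hblk] at he2
            simp only [List.cons_append, List.append_assoc, List.cons.injEq] at he2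
            have : a + 1 = h0 := he2.1
            rw [← this, mod_succ_of_ne hk ha] at hmod
            omega
        · rw [blk_of_ne ha, blk_of_ne hb] at ht
          simp only [List.cons_append, List.nil_append, List.cons.injEq] at ht
          omega

/-- Every 0 in a φ-image starts an image block of a small letter. -/
lemma zeroBlock (k : ℕ) (hk : 2 < k) :
    ∀ w x y : List ℕ, phiW k w = x ++ 0 :: y →
    ∃ p e v, w = p ++ e :: v ∧ x = phiW k p ∧ e < k - 1 ∧ y = (e + 1) :: phiW k v := by
  intro w
  induction w with
  | nil =>
    intro x y h
    rw [phiW_nil] at h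
    exact absurd h.symm (by simp)
  | cons a w' ih =>
    intro x y h
    rw [phiW_cons] at h
    by_cases ha : a % k = k - 1
    · rw [blk_of_eq ha] at h
      match x with
      | [] => simp at h
      | x0 :: x1 =>
        simp only [List.cons_append, List.cons.injEq] at h
        obtain ⟨h1, h2⟩ := h
        obtain ⟨p, e, v, g1, g2, g3, g4⟩ := ih x1 y h2
        exact ⟨a :: p, e, v, by simp [g1], by rw [phiW_cons, blk_of_eq ha, g2, h1]; rfl, g3, g4⟩
    · rw [blk_of_ne ha] at h
      match x with
      | [] =>
        simp only [List.cons_append, List.nil_append, List.cons.injEq] at h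
        obtain ⟨h1, h2⟩ := h
        have hak : a < k := by
          by_contra hc
          have h5 : 0 < a / k := Nat.div_pos (by omega) (by omega)
          have := Nat.mul_pos (show 0 < k by omega) h5
          omega
        have : a % k = a := Nat.mod_eq_of_lt hak
        refine ⟨[], a, w', by simp, by simp [phiW_nil], by omega, h2.symm⟩
      | [x0] =>
        simp only [List.cons_append, List.nil_append, List.cons.injEq] at h
        omega
      | x0 :: x2 :: x3 =>
        simp only [List.cons_append, List.cons.injEq] at h
        obtain ⟨h1, h2, h3⟩ := h
        obtain ⟨p, e, v, g1, g2, g3, g4⟩ := ih x3 y h3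
        refine ⟨a :: p, e, v, by simp [g1], ?_, g3, g4⟩
        rw [phiW_cons, blk_of_ne ha, g2, h1, h2]; rfl

/-- Locate: a factor `c :: 0 :: y` in a φ-image forces `c = b₀+1` with `b₀` preceding
a letter `e < k-1` in the preimage, and `y = (e+1) :: φ(v)`. -/
lemma locate (k : ℕ) (hk : 2 < k) (w x : List ℕ) (c : ℕ) (y : List ℕ)
    (h : phiW k w = x ++ c :: 0 :: y) :
    ∃ p b0 e v, w = p ++ b0 :: e :: v ∧ c = b0 + 1 ∧ e < k - 1 ∧ y = (e + 1) :: phiW k v := by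
  have h' : phiW k w = (x ++ [c]) ++ 0 :: y := by simpa using h
  obtain ⟨p0, e, v, h1, h2, h3, h4⟩ := zeroBlock k hk w _ _ h'
  rcases List.eq_nil_or_concat p0 with rfl | ⟨p, b0, rfl⟩
  · rw [phiW_nil] at h2
    exact absurd h2 (by simp)
  · rw [List.concat_eq_append] at h1 h2
    refine ⟨p, b0, e, v, by simpa using h1, ?_, h3, h4⟩
    rw [phiW_append] at h2
    rcases blk_concat k b0 with ⟨B, hB⟩
    have h2' : x ++ [c] = (phiW k p ++ B) ++ [b0 + 1] := by
      rw [h2]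
      simp [phiW_cons, phiW_nil, hB]
    have := congrArg List.getLast? h2'
    rw [List.getLast?_concat, List.getLast?_concat] at this
    exact Option.some.inj this

lemma W_zero (k : ℕ) : W k 0 = [0] := rfl

lemma W_succ (k n : ℕ) : W k (n + 1) = phiW k (W k n) :=
  Function.iterate_succ_apply' _ _ _

lemma W_last (k : ℕ) : ∀ n, ∃ D, W k n = D ++ [n] := by
  intro n
  induction n with
  | zero => exact ⟨[], rfl⟩
  | succ n ih =>
    obtain ⟨D, hD⟩ := ih
    rcases blk_concat k n with ⟨B, hB⟩
    refine ⟨phiW k D ++ B, ?_⟩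
    rw [W_succ, hD, phiW_append]
    simp [phiW_cons, phiW_nil, hB]

lemma W_dropLast (k n : ℕ) : W k n = (W k n).dropLast ++ [n] := by
  obtain ⟨D, hD⟩ := W_last k n
  rw [hD, List.dropLast_concat]

lemma W_le (k : ℕ) : ∀ n a, a ∈ W k n → a ≤ n := by
  intro n
  induction n with
  | zero => intro a ha; rw [W_zero] at ha; simp at ha; omega
  | succ n ih =>
    intro a ha
    rw [W_succ] at ha
    unfold phiW at ha
    rw [List.mem_flatMap] at ha
    obtain ⟨b, hb, hab⟩ := ha
    have hbn := ih b hb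
    by_cases h : b % k = k - 1 <;> simp [h] at hab
    · omega
    · rcases hab with h' | h'
      · have : k * (b / k) ≤ b := by
          have := Nat.div_mul_le_self b k
          calc k * (b / k) = b / k * k := Nat.mul_comm _ _
          _ ≤ b := Nat.div_mul_le_self b k
        omega
      · omega

lemma W_prefix01 (k : ℕ) (hk : 2 < k) : ∀ n, 1 ≤ n → ∃ t, W k n = 0 :: 1 :: t := by
  intro n
  induction n with
  | zero => omega
  | succ n ih =>
    intro _
    rcases Nat.eq_zero_or_pos n with rfl | hn
    · refine ⟨[], ?_⟩
      rw [W_succ, W_zero, phiW_cons, phiW_nil, blk_of_ne (a := 0) (by rw [Nat.zero_mod]; omega)]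
      simp
    · obtain ⟨t, ht⟩ := ih hn
      rw [W_succ, ht, phiW_cons, phiW_cons, blk_of_ne (a := 0) (by rw [Nat.zero_mod]; omega),
        blk_of_ne (a := 1) (by rw [Nat.mod_eq_of_lt (by omega : 1 < k)]; omega)]
      have e0 : (0 : ℕ) / k = 0 := Nat.zero_div k
      have e1 : (1 : ℕ) / k = 0 := Nat.div_eq_of_lt (by omega)
      rw [e0, e1, Nat.mul_zero]
      exact ⟨0 :: 2 :: phiW k t, rfl⟩

lemma DL_prefix01 (k : ℕ) (hk : 2 < k) (i : ℕ) (hi : 2 ≤ i) :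
    ∃ t, (W k i).dropLast = 0 :: 1 :: t := by
  obtain ⟨m, rfl⟩ : ∃ m, i = m + 1 := ⟨i - 1, by omega⟩
  obtain ⟨t, ht⟩ := W_prefix01 k hk m (by omega)
  rw [W_succ, ht, phiW_cons, phiW_cons, blk_of_ne (a := 0) (by rw [Nat.zero_mod]; omega),
    blk_of_ne (a := 1) (by rw [Nat.mod_eq_of_lt (by omega : 1 < k)]; omega)]
  have e0 : (0 : ℕ) / k = 0 := Nat.zero_div k
  have e1 : (1 : ℕ) / k = 0 := Nat.div_eq_of_lt (by omega)
  rw [e0, e1, Nat.mul_zero]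
  refine ⟨(0 :: 2 :: phiW k t).dropLast, ?_⟩
  simp [List.dropLast_cons₂]

lemma DL_phi_a (k i : ℕ) (hi : 1 ≤ i) (h : (i - 1) % k = k - 1) :
    (W k i).dropLast = phiW k ((W k (i - 1)).dropLast) := by
  obtain ⟨m, rfl⟩ : ∃ m, i = m + 1 := ⟨i - 1, by omega⟩
  simp only [Nat.add_sub_cancel] at h ⊢
  rw [W_succ]
  conv_lhs => rw [W_dropLast k m]
  rw [phiW_append, phiW_cons, phiW_nil, blk_of_eq h]
  simp [List.dropLast_concat]

lemma DL_phi_b (k i : ℕ) (hi : 1 ≤ i) (h : (i - 1) % k ≠ k - 1) :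
    (W k i).dropLast = phiW k ((W k (i - 1)).dropLast) ++ [k * ((i - 1) / k)] := by
  obtain ⟨m, rfl⟩ : ∃ m, i = m + 1 := ⟨i - 1, by omega⟩
  simp only [Nat.add_sub_cancel] at h ⊢
  rw [W_succ]
  conv_lhs => rw [W_dropLast k m]
  rw [phiW_append, phiW_cons, phiW_nil, blk_of_ne h]
  have : phiW k ((W k m).dropLast) ++ ([k * (m / k), m + 1] ++ []) =
      (phiW k ((W k m).dropLast) ++ [k * (m / k)]) ++ [m + 1] := by simp
  rw [this, List.dropLast_concat]

lemma noZZ_phi (k : ℕ) (hk : 2 < k) (w : List ℕ) : ¬ ([0, 0] <:+: phiW k w) := by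
  rintro ⟨x, s, hxs⟩
  have h : phiW k w = x ++ 0 :: 0 :: s := by rw [← hxs]; simp
  obtain ⟨p, e, v, h1, h2, h3, h4⟩ := zeroBlock k hk w x (0 :: s) h
  simp only [List.cons.injEq] at h4
  omega

lemma noZZ_W (k : ℕ) (hk : 2 < k) (n : ℕ) : ¬ ([0, 0] <:+: W k n) := by
  cases n with
  | zero =>
    intro h
    have := h.length_le
    simp [W_zero] at this
  | succ n => rw [W_succ]; exact noZZ_phi k hk _

/-- The key invariant: in `W k n`, an occurrence of `(W k i).dropLast` (with a suitable
final letter) can never be preceded by a letter `≤ i`. -/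
lemma inv (k : ℕ) (hk : 2 < k) : ∀ n : ℕ,
    (∀ i c b, 1 ≤ i → i ≤ k - 2 → c ≤ i → (b ≤ i ∨ k ≤ b) →
      ¬ ((c :: ((W k i).dropLast ++ [b])) <:+: W k n)) ∧
    (∀ i c, k - 1 ≤ i → c ≤ i → ¬ ((c :: (W k i).dropLast) <:+: W k n)) := by
  intro n
  induction n with
  | zero =>
    constructor
    · rintro i c b h1 h2 h3 h4 ⟨x, s, hxs⟩
      have := congrArg List.length hxs
      simp [W_zero] at this
      omega
    · rintro i c h1 h2 ⟨x, s, hxs⟩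
      obtain ⟨t, ht⟩ := DL_prefix01 k hk i (by omega)
      rw [ht] at hxs
      have := congrArg List.length hxs
      simp [W_zero] at this
      omega
  | succ n ih =>
    obtain ⟨ih2, ih3⟩ := ih
    constructor
    · -- part 2 : 1 ≤ i ≤ k - 2
      rintro i c b h1 h2 h3 h4 ⟨x, s, hxs⟩
      rw [W_succ] at hxs
      rcases Nat.lt_or_ge i 2 with hi2 | hi2
      · -- i = 1
        have hi1 : i = 1 := by omega
        subst hi1
        have hW1 : W k 1 = [0, 1] := by
          rw [show (1:ℕ) = 0 + 1 from rfl, W_succ, W_zero, phiW_cons, phiW_nil,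
            blk_of_ne (a := 0) (by rw [Nat.zero_mod]; omega)]
          simp
        rw [hW1] at hxs
        have h : phiW k (W k n) = x ++ c :: 0 :: (b :: s) := by
          rw [← hxs]; simp
        obtain ⟨p, b0, e, v, g1, g2, g3, g4⟩ := locate k hk _ _ _ _ h
        simp only [List.cons.injEq] at g4
        rcases h4 with h4 | h4
        · have he : e = 0 := by omega
          have hb0 : b0 = 0 := by omega
          rw [he, hb0] at g1
          exact noZZ_W k hk n ⟨p, v, by rw [g1]; simp⟩
        · omega
      · -- 2 ≤ i ≤ k - 2
        obtain ⟨t, ht⟩ := DL_prefix01 k hk i hi2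
        have hmod : (i - 1) % k ≠ k - 1 := by
          rw [Nat.mod_eq_of_lt (by omega : i - 1 < k)]; omega
        have hDL := DL_phi_b k i (by omega) hmod
        rw [Nat.div_eq_of_lt (by omega : i - 1 < k), Nat.mul_zero] at hDL
        have h : phiW k (W k n) = x ++ c :: 0 :: (1 :: (t ++ b :: s)) := by
          rw [← hxs, ht]; simp
        obtain ⟨p, b0, e, v, g1, g2, g3, g4⟩ := locate k hk _ _ _ _ h
        simp only [List.cons.injEq] at g4
        obtain ⟨g4a, g4b⟩ := g4
        have he : e = 0 := by omega
        subst he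
        have hz : phiW k (0 :: v) =
            phiW k ((W k (i - 1)).dropLast) ++ 0 :: b :: s := by
          rw [phiW_cons, blk_of_ne (a := 0) (by rw [Nat.zero_mod]; omega), ← g4b,
            Nat.zero_div, Nat.mul_zero]
          calc ([0, 0 + 1] : List ℕ) ++ (t ++ b :: s) = (0 :: 1 :: t) ++ b :: s := by simp
          _ = (W k i).dropLast ++ b :: s := by rw [← ht]
          _ = (phiW k ((W k (i - 1)).dropLast) ++ [0]) ++ b :: s := by rw [hDL]
          _ = phiW k ((W k (i - 1)).dropLast) ++ 0 :: b :: s := by simp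
        rcases sync k hk _ _ ⟨0 :: b :: s, hz.symm⟩ with hzp |
          ⟨r, a', b', z₂, e1, e2, e3, e4, e5⟩
        · obtain ⟨z', hz'⟩ := hzp
          have h7 : phiW k z' = 0 :: b :: s := by
            have h6 := hz
            rw [← hz', phiW_append] at h6
            exact List.append_cancel_left h6
          cases z' with
          | nil => rw [phiW_nil] at h7; exact absurd h7 (by simp)
          | cons e' z'' =>
            rw [phiW_cons] at h7
            by_cases he' : e' % k = k - 1
            · rw [blk_of_eq he'] at h7
              simp at h7
            · rw [blk_of_ne he'] at h7
              simp only [List.cons_append, List.cons.injEq] at h7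
              obtain ⟨h7a, h7b, _⟩ := h7
              have he'k : e' < k := by
                by_contra hc
                have h5 : 0 < e' / k := Nat.div_pos (by omega) (by omega)
                have := Nat.mul_pos (show 0 < k by omega) h5
                omega
              have he'2 : e' ≤ k - 2 := by
                have := Nat.mod_eq_of_lt he'k; omega
              rcases h4 with h4 | h4
              · exact ih2 (i - 1) b0 e' (by omega) (by omega) (by omega)
                  (Or.inl (by omega)) ⟨p, z'', by rw [g1, ← hz']; simp⟩
              · omega
        · exfalso
          have ha'mem : a' ∈ W k (i - 1) := by
            have : a' ∈ (W k (i - 1)).dropLast := by rw [e1]; simp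
            exact (List.dropLast_sublist _).subset this
          have := W_le k (i - 1) a' ha'mem
          have ha'k : a' % k = a' := Nat.mod_eq_of_lt (by omega)
          omega
    · -- part 3 : k - 1 ≤ i
      rintro i c h1 h3 ⟨x, s, hxs⟩
      rw [W_succ] at hxs
      obtain ⟨t, ht⟩ := DL_prefix01 k hk i (by omega)
      have h : phiW k (W k n) = x ++ c :: 0 :: (1 :: (t ++ s)) := by
        rw [← hxs, ht]; simp
      obtain ⟨p, b0, e, v, g1, g2, g3, g4⟩ := locate k hk _ _ _ _ h
      simp only [List.cons.injEq] at g4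
      obtain ⟨g4a, g4b⟩ := g4
      have he : e = 0 := by omega
      subst he
      by_cases him : i % k = 0
      · obtain ⟨q, hq⟩ := Nat.dvd_of_mod_eq_zero him
        have hq1 : 1 ≤ q := by
          by_contra hc
          have : q = 0 := by omega
          rw [this, Nat.mul_zero] at hq
          omega
        have hkq : k * q = k * (q - 1) + k := by
          have h5 : q - 1 + 1 = q := by omega
          calc k * q = k * ((q - 1) + 1) := by rw [h5]
          _ = k * (q - 1) + k := by rw [Nat.mul_succ]
        have hik : k ≤ i := by omega
        have hmod : (i - 1) % k = k - 1 := by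
          have h5 : i - 1 = k * (q - 1) + (k - 1) := by omega
          rw [h5, Nat.mul_add_mod]
          exact Nat.mod_eq_of_lt (by omega)
        have hDL := DL_phi_a k i (by omega) hmod
        have hz : phiW k (0 :: v) = phiW k ((W k (i - 1)).dropLast) ++ s := by
          rw [phiW_cons, blk_of_ne (a := 0) (by rw [Nat.zero_mod]; omega), ← g4b,
            Nat.zero_div, Nat.mul_zero]
          calc ([0, 0 + 1] : List ℕ) ++ (t ++ s) = (0 :: 1 :: t) ++ s := by simp
          _ = (W k i).dropLast ++ s := by rw [← ht]
          _ = phiW k ((W k (i - 1)).dropLast) ++ s := by rw [hDL]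
        rcases sync k hk _ _ ⟨s, hz.symm⟩ with hzp |
          ⟨r, a', b', z₂, e1, e2, e3, e4, e5⟩
        · obtain ⟨z', hz'⟩ := hzp
          exact ih3 (i - 1) b0 (by omega) (by omega) ⟨p, z', by rw [g1, ← hz']; simp⟩
        · have hmod2 : (i - 1 - 1) % k ≠ k - 1 := by
            have h5 : i - 1 - 1 = k * (q - 1) + (k - 2) := by omega
            rw [h5, Nat.mul_add_mod, Nat.mod_eq_of_lt (by omega)]
            omega
          have hDL2 := DL_phi_b k (i - 1) (by omega) hmod2
          have h5 : r ++ [a'] = phiW k ((W k (i - 1 - 1)).dropLast) ++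
              [k * ((i - 1 - 1) / k)] := e1.symm.trans hDL2
          have h6 := congrArg List.getLast? h5
          rw [List.getLast?_concat, List.getLast?_concat] at h6
          have h7 := Option.some.inj h6
          rw [h7, Nat.mul_mod_right] at e2
          omega
      · have hmod : (i - 1) % k ≠ k - 1 := by
          intro hc
          have h5 : i - 1 + 1 = i := by omega
          have h6 := mod_succ_of_eq hk hc
          rw [h5] at h6
          exact him h6
        have hDL := DL_phi_b k i (by omega) hmod
        have hz : phiW k (0 :: v) =
            phiW k ((W k (i - 1)).dropLast) ++ (k * ((i - 1) / k)) :: s := by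
          rw [phiW_cons, blk_of_ne (a := 0) (by rw [Nat.zero_mod]; omega), ← g4b,
            Nat.zero_div, Nat.mul_zero]
          have h5 : (0 : ℕ) :: 1 :: t = (W k i).dropLast := ht.symm
          calc ([0, 0 + 1] : List ℕ) ++ (t ++ s) = (0 :: 1 :: t) ++ s := by simp
          _ = (W k i).dropLast ++ s := by rw [h5]
          _ = (phiW k ((W k (i - 1)).dropLast) ++ [k * ((i - 1) / k)]) ++ s := by rw [hDL]
          _ = phiW k ((W k (i - 1)).dropLast) ++ (k * ((i - 1) / k)) :: s := by simp
        rcases sync k hk _ _ ⟨(k * ((i - 1) / k)) :: s, hz.symm⟩ with hzp |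
          ⟨r, a', b', z₂, e1, e2, e3, e4, e5⟩
        · obtain ⟨z', hz'⟩ := hzp
          rcases Nat.lt_or_ge i k with hik | hik
          · -- i = k - 1, M = 0
            have hM : k * ((i - 1) / k) = 0 := by
              rw [Nat.div_eq_of_lt (by omega), Nat.mul_zero]
            have h7 : phiW k z' = 0 :: s := by
              have h6 := hz
              rw [← hz', phiW_append] at h6
              have h8 := List.append_cancel_left h6
              rw [hM] at h8
              exact h8
            cases z' with
            | nil => rw [phiW_nil] at h7; exact absurd h7 (by simp)
            | cons e' z'' =>
              rw [phiW_cons] at h7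
              by_cases he' : e' % k = k - 1
              · rw [blk_of_eq he'] at h7
                simp at h7
              · rw [blk_of_ne he'] at h7
                simp only [List.cons_append, List.cons.injEq] at h7
                obtain ⟨h7a, _⟩ := h7
                have he'k : e' < k := by
                  by_contra hc
                  have h5 : 0 < e' / k := Nat.div_pos (by omega) (by omega)
                  have := Nat.mul_pos (show 0 < k by omega) h5
                  omega
                have he'2 : e' ≤ k - 2 := by
                  have := Nat.mod_eq_of_lt he'k; omega
                exact ih2 (i - 1) b0 e' (by omega) (by omega) (by omega)
                  (Or.inl (by omega)) ⟨p, z'', by rw [g1, ← hz']; simp⟩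
          · exact ih3 (i - 1) b0 (by omega) (by omega) ⟨p, z', by rw [g1, ← hz']; simp⟩
        · exfalso
          have hz2 : phiW k (0 :: v) =
              phiW k r ++ (a' + 1) :: (b' + 1) :: phiW k z₂ := by
            rw [e3, phiW_append, phiW_cons, blk_of_ne e5, e4]
            simp
          have hz3 : phiW k (0 :: v) =
              phiW k r ++ (a' + 1) :: (k * ((i - 1) / k)) :: s := by
            rw [hz, e1, phiW_append, phiW_cons, phiW_nil, blk_of_eq e2]
            simp
          have h8 := hz2.symm.trans hz3
          have h9 := List.append_cancel_left h8
          simp only [List.cons.injEq] at h9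
          have h10 : (b' + 1) % k = 0 := by
            rw [h9.2.1, Nat.mul_mod_right]
          rw [mod_succ_of_ne hk e5] at h10
          have := Nat.mod_lt b' (show 0 < k by omega)
          omega

end KbonAux

theorem no_WiWi_factor (k i n : ℕ) (hk : 2 < k) (hi : i < n) (hn : k + 1 ≤ n) :
    ¬ (W k i ++ W k i) <:+: W k n := by
  intro h
  obtain ⟨D, hD⟩ := KbonAux.W_last k i
  have hD2 : (W k i).dropLast = D := by rw [hD, List.dropLast_concat]
  have hsq : (i :: (D ++ [i])) <:+: W k n := by
    refine List.IsInfix.trans ⟨D, [], ?_⟩ h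
    rw [hD]; simp
  rcases Nat.eq_zero_or_pos i with rfl | hi0
  · have hD0 : D = [] := by
      have h5 := hD
      rw [KbonAux.W_zero] at h5
      cases D with
      | nil => rfl
      | cons a D' => simp at h5
    rw [hD0] at hsq
    exact KbonAux.noZZ_W k hk n (by simpa using hsq)
  · rcases Nat.lt_or_ge i (k - 1) with hik | hik
    · refine (KbonAux.inv k hk n).1 i i i hi0 (by omega) (le_refl i)
        (Or.inl (le_refl i)) ?_
      rw [hD2]
      exact hsq
    · refine (KbonAux.inv k hk n).2 i i hik (le_refl i) ?_
      rw [hD2]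
      refine List.IsInfix.trans ?_ hsq
      exact ⟨[], [i], by simp⟩
end

section
/- If n < 2k-1, then W_n^(k) contains no square factor. -/
namespace NoSqAux

/-- The image block of a single letter. -/
def blk (k a : ℕ) : List ℕ := if a % k = k - 1 then [a + 1] else [k * (a / k), a + 1]

lemma phiW_nil (k : ℕ) : phiW k [] = [] := rfl

lemma phiW_cons (k a : ℕ) (t : List ℕ) : phiW k (a :: t) = blk k a ++ phiW k t := rfl

lemma W_zero (k : ℕ) : W k 0 = [0] := rfl

lemma W_succ (k n : ℕ) : W k (n + 1) = phiW k (W k n) :=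
  Function.iterate_succ_apply' _ _ _

lemma blk_ne_nil (k a : ℕ) : blk k a ≠ [] := by
  unfold blk; split <;> simp

lemma phiW_ne_nil (k : ℕ) {w : List ℕ} (h : w ≠ []) : phiW k w ≠ [] := by
  cases w with
  | nil => exact absurd rfl h
  | cons a t =>
    rw [phiW_cons]
    simp [blk_ne_nil]

lemma phiW_eq_nil {k : ℕ} {w : List ℕ} (h : phiW k w = []) : w = [] := by
  by_contra hw
  exact phiW_ne_nil k hw h

lemma mod_high {k b : ℕ} (h1 : k ≤ b) (h2 : b < 2 * k) : b % k = b - k := by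
  rw [Nat.mod_eq_sub_mod h1, Nat.mod_eq_of_lt (by omega)]

/-- If `b ≤ 2k-2` then `b % k = k-1` forces `b = k-1`. -/
lemma modkk {k b : ℕ} (hk : 2 < k) (hb : b ≤ 2 * k - 2) (h : b % k = k - 1) : b = k - 1 := by
  rcases Nat.lt_or_ge b k with hlt | hge
  · rw [Nat.mod_eq_of_lt hlt] at h; omega
  · rw [mod_high hge (by omega)] at h; omega

lemma divk {k b : ℕ} (hk : 2 < k) (hb : b ≤ 2 * k - 2) :
    (k * (b / k) = 0 ∧ b < k) ∨ (k * (b / k) = k ∧ k ≤ b) := by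
  rcases Nat.lt_or_ge b k with hlt | hge
  · left; rw [Nat.div_eq_of_lt hlt]; omega
  · right
    have hm : b % k = b - k := mod_high hge (by omega)
    have hd := Nat.div_add_mod b k
    omega

/-- Head of a block: it is `0` or `k`, with corresponding range information. -/
lemma headb {k b : ℕ} (hk : 2 < k) (hb : b ≤ 2 * k - 2) :
    ∃ d r, blk k b = d :: r ∧ ((d = 0 ∧ b + 1 < k) ∨ (d = k ∧ k - 1 ≤ b)) := by
  unfold blk
  by_cases hm : b % k = k - 1
  · have hb' : b = k - 1 := modkk hk hb hm
    exact ⟨b + 1, [], by simp [hm], Or.inr ⟨by omega, by omega⟩⟩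
  · rcases divk hk hb with ⟨h0, hlt⟩ | ⟨h0, hge⟩
    · refine ⟨k * (b / k), [b + 1], by simp [hm], Or.inl ⟨h0, ?_⟩⟩
      have : b % k = b := Nat.mod_eq_of_lt hlt
      omega
    · exact ⟨k * (b / k), [b + 1], by simp [hm], Or.inr ⟨h0, by omega⟩⟩

/-- Every letter of `W k n` is at most `n`. -/
lemma lettersW (k : ℕ) : ∀ n, ∀ a ∈ W k n, a ≤ n := by
  intro n
  induction n with
  | zero => intro a ha; rw [W_zero] at ha; simp at ha; omega
  | succ n ih =>
    intro a ha
    rw [W_succ] at ha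
    unfold phiW at ha
    rw [List.mem_flatMap] at ha
    obtain ⟨b, hb, hab⟩ := ha
    have hbn := ih b hb
    split at hab <;> simp at hab
    · omega
    · rcases hab with h | h
      · have : k * (b / k) ≤ b := by
          calc k * (b / k) = b / k * k := by ring
          _ ≤ b := Nat.div_mul_le_self b k
        omega
      · omega

lemma W_ne_nil (k n : ℕ) : W k n ≠ [] := by
  induction n with
  | zero => rw [W_zero]; simp
  | succ n ih => rw [W_succ]; exact phiW_ne_nil k ih

/-- The fundamental "pair" lemma: any adjacent pair `[c, d]` inside `phiW k w`
    is either an interior pair of a block, or a block-boundary pair. -/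
lemma pair {k : ℕ} (hk : 2 < k) :
    ∀ w : List ℕ, (∀ a ∈ w, a ≤ 2 * k - 2) → ∀ x z c d, phiW k w = x ++ c :: d :: z →
    (∃ a ∈ w, a % k ≠ k - 1 ∧ c = k * (a / k) ∧ d = a + 1) ∨
    (∃ a b, [a, b] <:+: w ∧ c = a + 1 ∧ ((d = 0 ∧ b + 1 < k) ∨ (d = k ∧ k - 1 ≤ b))) := by
  intro w
  induction w with
  | nil => intro _ x z c d h; rw [phiW_nil] at h; exact absurd h (by simp)
  | cons a t ih =>
    intro hGL x z c d h
    have ha : a ≤ 2 * k - 2 := hGL a (by simp)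
    have htGL : ∀ b ∈ t, b ≤ 2 * k - 2 := fun b hb => hGL b (by simp [hb])
    rw [phiW_cons] at h
    by_cases hm : a % k = k - 1
    · rw [blk, if_pos hm] at h
      simp only [List.cons_append, List.nil_append] at h
      cases x with
      | nil =>
        injection h with hc ht
        cases t with
        | nil => rw [phiW_nil] at ht; exact absurd ht (by simp)
        | cons b t' =>
          have hb : b ≤ 2 * k - 2 := htGL b (by simp)
          obtain ⟨d0, r, hblk, hd0⟩ := headb hk hb
          rw [phiW_cons, hblk] at ht
          simp only [List.cons_append] at ht
          have hdd : d0 = d := by injection ht with h1 h2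
          right
          refine ⟨a, b, ⟨[], t', by simp⟩, by omega, ?_⟩
          rw [← hdd]; exact hd0
      | cons e x' =>
        injection h with h1 h2
        rcases ih htGL x' z c d h2 with ⟨a0, h0, hrest⟩ | ⟨a0, b0, hinf, hrest⟩
        · exact Or.inl ⟨a0, by simp [h0], hrest⟩
        · exact Or.inr ⟨a0, b0, List.infix_cons hinf, hrest⟩
    · rw [blk, if_neg hm] at h
      simp only [List.cons_append, List.nil_append] at h
      cases x with
      | nil =>
        injection h with h1 h2
        injection h2 with h3 h4
        exact Or.inl ⟨a, by simp, hm, h1.symm, h3.symm⟩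
      | cons e x' =>
        injection h with h1 h2
        cases x' with
        | nil =>
          injection h2 with h3 h4
          -- h4 : phiW k t = d :: z, h3 : a + 1 = c
          cases t with
          | nil => rw [phiW_nil] at h4; exact absurd h4 (by simp)
          | cons b t' =>
            have hb : b ≤ 2 * k - 2 := htGL b (by simp)
            obtain ⟨d0, r, hblk, hd0⟩ := headb hk hb
            rw [phiW_cons, hblk] at h4
            simp only [List.cons_append] at h4
            have hdd : d0 = d := by injection h4 with h1' h2'
            right
            refine ⟨a, b, ⟨[], t', by simp⟩, h3.symm, ?_⟩
            rw [← hdd]; exact hd0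
        | cons e' x'' =>
          injection h2 with h3 h4
          rcases ih htGL x'' z c d h4 with ⟨a0, h0, hrest⟩ | ⟨a0, b0, hinf, hrest⟩
          · exact Or.inl ⟨a0, by simp [h0], hrest⟩
          · exact Or.inr ⟨a0, b0, List.infix_cons hinf, hrest⟩

/-- If a suffix of `phiW k w` starts with `0` or `k`, the split is block-aligned. -/
lemma split_aligned {k : ℕ} (hk : 2 < k) :
    ∀ w x z : List ℕ, phiW k w = x ++ z → (∀ c r, z = c :: r → c = 0 ∨ c = k) →
    ∃ w1 w2, w = w1 ++ w2 ∧ phiW k w1 = x ∧ phiW k w2 = z := by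
  intro w
  induction w with
  | nil =>
    intro x z h _
    rw [phiW_nil] at h
    have hx : x = [] := by
      cases x with
      | nil => rfl
      | cons a t => simp at h
    subst hx
    simp at h
    exact ⟨[], [], by simp, rfl, by rw [phiW_nil, h]⟩
  | cons a t ih =>
    intro x z h hz
    rw [phiW_cons] at h
    cases x with
    | nil =>
      simp only [List.nil_append] at h
      exact ⟨[], a :: t, rfl, rfl, by rw [phiW_cons, h]⟩
    | cons e x' =>
      by_cases hm : a % k = k - 1
      · rw [blk, if_pos hm] at h
        simp only [List.cons_append, List.nil_append] at h
        injection h with h1 h2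
        obtain ⟨w1, w2, hw, hp1, hp2⟩ := ih x' z h2 hz
        exact ⟨a :: w1, w2, by rw [hw]; rfl, by rw [phiW_cons, hp1, blk, if_pos hm, h1]; rfl, hp2⟩
      · rw [blk, if_neg hm] at h
        simp only [List.cons_append, List.nil_append] at h
        injection h with h1 h2
        cases x' with
        | nil =>
          simp only [List.nil_append] at h2
          -- z = (a+1) :: phiW k t, but head of z must be 0 or k
          rcases hz (a + 1) (phiW k t) h2.symm with h0 | h0
          · omega
          · -- a + 1 = k forces a = k - 1 hence a % k = k - 1, contradiction
            have : a = k - 1 := by omega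
            rw [this, Nat.mod_eq_of_lt (by omega)] at hm
            exact absurd rfl hm
        | cons e' x'' =>
          injection h2 with h3 h4
          obtain ⟨w1, w2, hw, hp1, hp2⟩ := ih x'' z h4 hz
          refine ⟨a :: w1, w2, by rw [hw]; rfl, ?_, hp2⟩
          rw [phiW_cons, hp1, blk, if_neg hm, h1, h3]
          rfl

/-- Comparison of two parses: if `phiW w2 = phiW z1 ++ y` then either `z1` is a
    prefix of `w2`, or they diverge in the specific "k-1 versus high letter" way. -/
lemma compare {k : ℕ} (hk : 2 < k) :
    ∀ z1 w2 y : List ℕ, (∀ a ∈ z1, a ≤ 2 * k - 2) → (∀ a ∈ w2, a ≤ 2 * k - 2) →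
    phiW k w2 = phiW k z1 ++ y →
    z1 <+: w2 ∨ ∃ Z b rest, z1 = Z ++ [k - 1] ∧ w2 = Z ++ b :: rest ∧ k ≤ b := by
  intro z1
  induction z1 with
  | nil => intro w2 y _ _ _; exact Or.inl (List.nil_prefix)
  | cons a t ih =>
    intro w2 y hGL1 hGL2 h
    have ha : a ≤ 2 * k - 2 := hGL1 a (by simp)
    have htGL : ∀ x ∈ t, x ≤ 2 * k - 2 := fun x hx => hGL1 x (by simp [hx])
    cases w2 with
    | nil =>
      rw [phiW_nil, phiW_cons] at h
      exact absurd h.symm (by simp [blk_ne_nil])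
    | cons b t2 =>
      have hb : b ≤ 2 * k - 2 := hGL2 b (by simp)
      have ht2GL : ∀ x ∈ t2, x ≤ 2 * k - 2 := fun x hx => hGL2 x (by simp [hx])
      rw [phiW_cons, phiW_cons] at h
      by_cases hma : a % k = k - 1 <;> by_cases hmb : b % k = k - 1
      · -- both blocks are singletons [k]
        have haa : a = k - 1 := modkk hk ha hma
        have hbb : b = k - 1 := modkk hk hb hmb
        simp only [blk] at h
        rw [if_pos hma, if_pos hmb] at h
        simp only [List.cons_append, List.nil_append] at h
        injection h with h1 h2
        rcases ih t2 y htGL ht2GL h2 with hpre | ⟨Z, b0, rest, hz, hw, hb0⟩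
        · left
          rw [show a = b by omega]
          exact List.cons_prefix_cons.mpr ⟨rfl, hpre⟩
        · right
          refine ⟨b :: Z, b0, rest, ?_, by rw [hw]; rfl, hb0⟩
          rw [hz, show a = b by omega]
          rfl
      · -- a = k-1 (block [k]), b high (block [k, b+1])
        have haa : a = k - 1 := modkk hk ha hma
        simp only [blk] at h
        rw [if_pos hma, if_neg hmb] at h
        simp only [List.cons_append, List.nil_append] at h
        injection h with h1 h2
        -- h1 : k * (b / k) = a + 1, h2 : (b+1) :: phiW k t2 = phiW k t ++ y
        have hbk : k ≤ b := by
          rcases divk hk hb with ⟨h0, _⟩ | ⟨_, hge⟩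
          · omega
          · exact hge
        have htnil : t = [] := by
          cases t with
          | nil => rfl
          | cons c t' =>
            have hc : c ≤ 2 * k - 2 := htGL c (by simp)
            obtain ⟨d0, r, hblk, hd0⟩ := headb hk hc
            rw [phiW_cons, hblk] at h2
            simp only [List.cons_append] at h2
            injection h2 with h3 h4
            -- h3 : b + 1 = d0, d0 = 0 ∨ d0 = k with constraints
            rcases hd0 with ⟨h5, _⟩ | ⟨h5, _⟩ <;> omega
        subst htnil
        exact Or.inr ⟨[], b, t2, by simp [haa], rfl, hbk⟩
      · -- a high, b = k-1 : impossible
        have hbb : b = k - 1 := modkk hk hb hmb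
        simp only [blk] at h
        rw [if_neg hma, if_pos hmb] at h
        simp only [List.cons_append, List.nil_append] at h
        injection h with h1 h2
        -- h1 : b + 1 = k * (a / k), h2 : phiW k t2 = (a+1) :: (phiW k t ++ y)
        have hak : k ≤ a := by
          rcases divk hk ha with ⟨h0, _⟩ | ⟨_, hge⟩
          · omega
          · exact hge
        exfalso
        cases t2 with
        | nil => rw [phiW_nil] at h2; exact absurd h2.symm (by simp)
        | cons c t2' =>
          have hc : c ≤ 2 * k - 2 := ht2GL c (by simp)
          obtain ⟨d0, r, hblk, hd0⟩ := headb hk hc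
          rw [phiW_cons, hblk] at h2
          simp only [List.cons_append] at h2
          injection h2 with h3 h4
          rcases hd0 with ⟨h5, _⟩ | ⟨h5, _⟩ <;> omega
      · -- both double blocks
        simp only [blk] at h
        rw [if_neg hma, if_neg hmb] at h
        simp only [List.cons_append, List.nil_append] at h
        injection h with h1 h2
        injection h2 with h3 h4
        -- h3 : b + 1 = a + 1 hence a = b, h4 : phiW k t2 = phiW k t ++ y
        have hab : a = b := by omega
        rcases ih t2 y htGL ht2GL h4 with hpre | ⟨Z, b0, rest, hz, hw, hb0⟩
        · left; rw [hab]; exact List.cons_prefix_cons.mpr ⟨rfl, hpre⟩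
        · right
          refine ⟨b :: Z, b0, rest, ?_, by rw [hw]; rfl, hb0⟩
          rw [hz, hab]; rfl

/-- Key chain lemma: a pair `[c, b]` with `c ≤ k-1` and `b ≥ k-1` in `W k n`
    forces `n ≥ c + k - 1`. -/
lemma chain {k : ℕ} (hk : 2 < k) :
    ∀ n, n ≤ 2 * k - 2 → ∀ c b, c ≤ k - 1 → k - 1 ≤ b → [c, b] <:+: W k n →
    c + k - 1 ≤ n := by
  intro n
  induction n with
  | zero =>
    intro _ c b _ _ hinf
    have := hinf.length_le
    rw [W_zero] at this
    simp at this
  | succ n ih =>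
    intro hn c b hc hb hinf
    obtain ⟨s, t, hst⟩ := hinf
    have heq : phiW k (W k n) = s ++ c :: b :: t := by
      rw [← W_succ, ← hst]; simp
    have hGL : ∀ a ∈ W k n, a ≤ 2 * k - 2 := fun a haa =>
      le_trans (lettersW k n a haa) (by omega)
    rcases pair hk (W k n) hGL s t c b heq with
      ⟨a, hamem, ham, hceq, hbeq⟩ | ⟨a0, b0, hinf0, hceq, hcase⟩
    · -- interior pair : c = k*(a/k), b = a+1
      rcases divk hk (hGL a hamem) with ⟨h0, hlt⟩ | ⟨h0, hge⟩
      · -- c = 0, so a + 1 = b ≥ k - 1, a ∈ W k n so a ≤ n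
        have := lettersW k n a hamem
        omega
      · -- c = k, contradiction with c ≤ k - 1
        omega
    · -- boundary pair : c = a0 + 1, b = 0 (impossible) or b = k with b0 ≥ k-1
      rcases hcase with ⟨hb0, _⟩ | ⟨hbk, hb0⟩
      · omega
      · have := ih (by omega) a0 b0 (by omega) hb0 hinf0
        omega

lemma no_bad {k : ℕ} (hk : 2 < k) {n : ℕ} (hn : n ≤ 2 * k - 3) :
    ∀ b, k - 1 ≤ b → ¬ [k - 1, b] <:+: W k n := by
  intro b hb hinf
  have := chain hk n (by omega) (k - 1) b le_rfl hb hinf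
  omega

/-- The main squarefreeness lemma. -/
lemma main {k : ℕ} (hk : 2 < k) :
    ∀ n, n ≤ 2 * k - 2 → ∀ U : List ℕ, U ≠ [] → ¬ (U ++ U) <:+: W k n := by
  intro n
  induction n with
  | zero =>
    intro _ U hU hinf
    have h1 := hinf.length_le
    rw [W_zero] at h1
    have h2 : 1 ≤ U.length := List.length_pos_iff.mpr hU
    simp at h1
    omega
  | succ n ih =>
    intro hn1 U hU hinf
    set w := W k n with hw
    have hGL : ∀ a ∈ w, a ≤ 2 * k - 2 := fun a haa =>
      le_trans (lettersW k n a haa) (by omega)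
    have hSF : ∀ V : List ℕ, V ≠ [] → ¬ (V ++ V) <:+: w := ih (by omega)
    obtain ⟨x, y, hxy⟩ := hinf
    rw [W_succ] at hxy
    rw [← hw] at hxy
    -- hxy : x ++ (U ++ U) ++ y = phiW k w
    -- Step 1: normalize so the square starts with a block-start letter (0 or k)
    obtain ⟨x2, V, y2, hVne, hVhead, heq⟩ :
        ∃ (x2 V y2 : List ℕ), V ≠ [] ∧
          (∃ hv V', V = hv :: V' ∧ (hv = 0 ∨ hv = k)) ∧
          phiW k w = x2 ++ V ++ V ++ y2 := by
      cases U with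
      | nil => exact absurd rfl hU
      | cons u0 U1 =>
      by_cases hu0 : u0 = 0 ∨ u0 = k
      · exact ⟨x, u0 :: U1, y, by simp, ⟨u0, U1, rfl, hu0⟩, by rw [← hxy]; simp⟩
      · -- u0 is not a block start; find its (determined) predecessor
        have hx : x ≠ [] := by
          rintro rfl
          simp only [List.nil_append] at hxy
          cases hwc : w with
          | nil => rw [hwc, phiW_nil] at hxy; simp at hxy
          | cons b t =>
            have hb : b ≤ 2 * k - 2 := hGL b (by rw [hwc]; simp)
            obtain ⟨d0, r, hblk, hd0⟩ := headb hk hb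
            rw [hwc, phiW_cons, hblk] at hxy
            simp only [List.cons_append] at hxy
            have : u0 = d0 := by injection hxy
            rcases hd0 with ⟨h5, _⟩ | ⟨h5, _⟩ <;> exact hu0 (by omega)
        obtain ⟨x', c, hx'⟩ : ∃ x' c, x = x' ++ [c] :=
          ⟨x.dropLast, x.getLast hx, (List.dropLast_append_getLast hx).symm⟩
        -- first occurrence pair [c, u0]
        have heq1 : phiW k w = x' ++ c :: u0 :: (U1 ++ (u0 :: U1) ++ y) := by
          rw [← hxy, hx']; simp
        rcases pair hk w hGL _ _ _ _ heq1 with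
          ⟨a, hamem, ham, hceq, hdeq⟩ | ⟨a0, b0, _, _, hcase⟩
        swap
        · exfalso; rcases hcase with ⟨h5, _⟩ | ⟨h5, _⟩ <;> exact hu0 (by omega)
        -- c = k*(a/k), u0 = a+1
        -- second occurrence pair [c2, u0] with c2 = last of U
        have hUlast : ∃ dL, (u0 :: U1) = dL ++ [c] := by
          obtain ⟨dL, c2, hdl⟩ : ∃ dL c2, (u0 :: U1) = dL ++ [c2] :=
            ⟨(u0 :: U1).dropLast, (u0 :: U1).getLast (by simp),
              (List.dropLast_append_getLast (by simp)).symm⟩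
          have heq2 : phiW k w = (x' ++ [c] ++ dL) ++ c2 :: u0 :: (U1 ++ y) := by
            rw [← hxy, hx']
            nth_rewrite 1 [hdl]
            simp
          rcases pair hk w hGL _ _ _ _ heq2 with
            ⟨a2, ha2mem, ham2, hceq2, hdeq2⟩ | ⟨a0, b0, _, _, hcase⟩
          swap
          · exfalso; rcases hcase with ⟨h5, _⟩ | ⟨h5, _⟩ <;> exact hu0 (by omega)
          have : a2 = a := by omega
          refine ⟨dL, ?_⟩
          rw [hdl, hceq2, this, ← hceq]
        obtain ⟨dL, hdl⟩ := hUlast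
        have hcstart : c = 0 ∨ c = k := by
          rcases divk hk (hGL a hamem) with ⟨h0, _⟩ | ⟨h0, _⟩ <;> omega
        refine ⟨x', c :: dL, c :: y, by simp, ⟨c, dL, rfl, hcstart⟩, ?_⟩
        rw [← hxy, hx', hdl]
        simp
    -- Step 2: aligned square
    obtain ⟨hv, V', hVv, hhv⟩ := hVhead
    have hzcond : ∀ (z : List ℕ), (∀ c r, V ++ z = c :: r → c = 0 ∨ c = k) := by
      intro z c r hcr
      rw [hVv] at hcr
      simp only [List.cons_append] at hcr
      have : hv = c := by injection hcr
      omega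
    have heq' : phiW k w = x2 ++ (V ++ (V ++ y2)) := by rw [heq]; simp
    obtain ⟨w1, w2, hw12, hp1, hp2⟩ :=
      split_aligned hk w x2 (V ++ (V ++ y2)) heq' (hzcond (V ++ y2))
    obtain ⟨z1, w3, hw23, hpV, hpVy⟩ :=
      split_aligned hk w2 V (V ++ y2) hp2 (hzcond y2)
    have hz1GL : ∀ a ∈ z1, a ≤ 2 * k - 2 := fun a haa =>
      hGL a (by rw [hw12, hw23]; simp [haa])
    have hw3GL : ∀ a ∈ w3, a ≤ 2 * k - 2 := fun a haa =>
      hGL a (by rw [hw12, hw23]; simp [haa])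
    have hcomp : phiW k w3 = phiW k z1 ++ y2 := by rw [hpVy, hpV]
    have hz1ne : z1 ≠ [] := by
      intro h
      rw [h, phiW_nil] at hpV
      rw [hVv] at hpV
      simp at hpV
    rcases compare hk z1 w3 y2 hz1GL hw3GL hcomp with hpre | ⟨Z, b, rest, hz, hw3, hbk⟩
    · -- z1 is a prefix of w3 : square z1 z1 in w
      obtain ⟨w4, hw4⟩ := hpre
      refine hSF z1 hz1ne ⟨w1, w4, ?_⟩
      rw [hw12, hw23, ← hw4]
      simp
    · -- divergence case
      cases Z with
      | nil =>
        -- pair [k-1, b] in w with b ≥ k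
        have hbad : [k - 1, b] <:+: w := by
          refine ⟨w1, rest, ?_⟩
          rw [hw12, hw23, hz, hw3]
          simp
        exact no_bad hk (by omega) b (by omega) hbad
      | cons z0 Z' =>
        -- Z nonempty; let c be its last letter
        have hZne : (z0 :: Z') ≠ [] := by simp
        obtain ⟨Z'', c, hZ''⟩ : ∃ Z'' c, (z0 :: Z') = Z'' ++ [c] :=
          ⟨(z0 :: Z').dropLast, (z0 :: Z').getLast hZne,
            (List.dropLast_append_getLast hZne).symm⟩
        -- n ≥ 1 since w contains the letter k-1
        have hk1mem : (k - 1) ∈ w := by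
          rw [hw12, hw23, hz]
          simp
        have hn1' : 1 ≤ n := by
          have := lettersW k n (k - 1) hk1mem
          omega
        obtain ⟨m, hm⟩ : ∃ m, n = m + 1 := ⟨n - 1, by omega⟩
        have hwphi : w = phiW k (W k m) := by rw [hw, hm, W_succ]
        have hmGL : ∀ a ∈ W k m, a ≤ 2 * k - 2 := fun a haa =>
          le_trans (lettersW k m a haa) (by omega)
        -- pair [c, k-1] in w
        have hp_ck : ∃ s t : List ℕ, phiW k (W k m) = s ++ c :: (k - 1) :: t := by
          refine ⟨w1 ++ Z'', Z'' ++ [c] ++ b :: rest, ?_⟩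
          rw [← hwphi, hw12, hw23, hz, hw3, hZ'']
          simp
        obtain ⟨s1, t1, hpck⟩ := hp_ck
        have hc0 : c = 0 := by
          rcases pair hk (W k m) hmGL s1 t1 c (k - 1) hpck with
            ⟨a, hamem, ham, hceq, hdeq⟩ | ⟨a0, b0, _, _, hcase⟩
          · -- k - 1 = a + 1 so a = k - 2, c = k * ((k-2)/k) = 0
            have haeq : a = k - 2 := by omega
            rw [haeq] at hceq
            rw [Nat.div_eq_of_lt (by omega)] at hceq
            omega
          · exfalso; rcases hcase with ⟨h5, _⟩ | ⟨h5, _⟩ <;> omega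
        -- pair [c, b] = [0, b] in w with b ≥ k : impossible
        have hp_cb : ∃ s t : List ℕ, phiW k (W k m) = s ++ c :: b :: t := by
          refine ⟨w1 ++ (Z'' ++ [c] ++ [k - 1]) ++ Z'', rest, ?_⟩
          rw [← hwphi, hw12, hw23, hz, hw3, hZ'']
          simp
        obtain ⟨s2, t2, hpcb⟩ := hp_cb
        rcases pair hk (W k m) hmGL s2 t2 c b hpcb with
          ⟨a, hamem, ham, hceq, hdeq⟩ | ⟨a0, b0, _, hceq, _⟩
        · -- c = 0 = k*(a/k) so a < k and a ≠ k-1, but b = a+1 ≥ k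
          rcases divk hk (hmGL a hamem) with ⟨h0, hlt⟩ | ⟨h0, _⟩
          · have hmod : a % k = a := Nat.mod_eq_of_lt hlt
            omega
          · omega
        · omega

end NoSqAux

theorem no_square_below_2k1 (k n : ℕ) (hk : 2 < k) (hn : n < 2 * k - 1) :
    ∀ U : List ℕ, U ≠ [] → ¬ (U ++ U) <:+: W k n := by
  intro U hU hinf
  exact NoSqAux.main hk n (by omega) U hU hinf
end
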